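/- Suppose the cost functions g_n : ℝ → [0,∞) are deterministic (independent of the scenario), convex, with g_n(0) = 0. If the payoff F : ℝ₊^{N+1} → ℝ₊ is convex, then the robust super-replication price in the uncertain volatility model with bounds 0 ≤ σ_low ≤ σ_high equals the super-replication price in the binomial model with volatility σ_high and the same cost functions: V^{σ_low,σ_high}_g(F) = V^{σ_high,σ_high}_g(F). -/

import Mathlib

open Finset

/-- The stock price in the `N`-period model. -/
noncomputable def stock14 (N : ℕ) (s0 : ℝ) (ω : Fin N → ℝ) (n : ℕ) : ℝ :=
  s0 * Real.exp (∑ m ∈ Finset.univ.filter (fun m : Fin N => (m : ℕ) < n), ω m)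

/-- A strategy is adapted if its position at time `n` depends only on the first `n`
returns. -/
def adapted14 (N : ℕ) (γ : ℕ → (Fin N → ℝ) → ℝ) : Prop :=
  ∀ n : ℕ, ∀ ω ω' : Fin N → ℝ, (∀ m : Fin N, (m : ℕ) < n → ω m = ω' m) → γ n ω = γ n ω'

/-- The terminal mark-to-market wealth of the strategy `(y, γ)` with deterministic
cost functions `g`. -/
noncomputable def wealth14 (N : ℕ) (s0 : ℝ) (g : ℕ → ℝ → ℝ)
    (y : ℝ) (γ : ℕ → (Fin N → ℝ) → ℝ) (ω : Fin N → ℝ) : ℝ :=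
  y + ∑ k ∈ Finset.range N,
    (γ k ω * (stock14 N s0 ω (k + 1) - stock14 N s0 ω k)
      - g k ((γ k ω - (if k = 0 then 0 else γ (k - 1) ω)) * stock14 N s0 ω k))

/-- The robust super-replication price of the payoff `F` with volatility bounds
`lo ≤ |x_n| ≤ hi`. -/
noncomputable def price14 (N : ℕ) (s0 : ℝ) (g : ℕ → ℝ → ℝ)
    (F : (Fin (N + 1) → ℝ) → ℝ) (lo hi : ℝ) : ℝ :=
  sInf {y : ℝ | ∃ γ : ℕ → (Fin N → ℝ) → ℝ, adapted14 N γ ∧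
    ∀ ω : Fin N → ℝ, (∀ m, lo ≤ |ω m| ∧ |ω m| ≤ hi) →
      F (fun i : Fin (N + 1) => stock14 N s0 ω i) ≤ wealth14 N s0 g y γ ω}

/-! ### Auxiliary combinatorial lemmas -/

lemma sum_weights14 {N : ℕ} (f : Fin N → Bool → ℝ) :
    ∑ ε : Fin N → Bool, ∏ m, f m (ε m) = ∏ m, (f m false + f m true) := by
  rw [← Fintype.prod_sum]
  simp [Fintype.sum_bool, add_comm]

lemma split_one14 {N : ℕ} (j : Fin N) (f : Fin N → Bool → ℝ) (G : Bool → ℝ)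
    (H : (Fin N → Bool) → ℝ) (hH : ∀ ε (b : Bool), H (Function.update ε j b) = H ε) :
    ∑ ε : Fin N → Bool, (∏ m, f m (ε m)) * (H ε * G (ε j))
      = (f j false * G false + f j true * G true) *
        ∑ r : {m : Fin N // m ≠ j} → Bool,
          (∏ i, f i.1 (r i)) * H (fun m => if h : m = j then false else r ⟨m, h⟩) := by
  classical
  set base : ({m : Fin N // m ≠ j} → Bool) → Fin N → Bool :=
    fun r m => if h : m = j then false else r ⟨m, h⟩ with hbase
  rw [← (Equiv.funSplitAt j Bool).symm.sum_comp
    (fun ε => (∏ m, f m (ε m)) * (H ε * G (ε j)))]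
  rw [Fintype.sum_prod_type]
  have key : ∀ (b : Bool) (r : {m : Fin N // m ≠ j} → Bool),
      (Equiv.funSplitAt j Bool).symm (b, r) = Function.update (base r) j b := by
    intro b r
    funext m
    by_cases h : m = j
    · subst h; simp [Equiv.funSplitAt, Equiv.piSplitAt, base]
    · simp [Equiv.funSplitAt, Equiv.piSplitAt, h, Function.update_of_ne h, base]
  have step : ∀ (b : Bool) (r : {m : Fin N // m ≠ j} → Bool),
      (∏ m, f m ((Equiv.funSplitAt j Bool).symm (b, r) m)) *
        (H ((Equiv.funSplitAt j Bool).symm (b, r)) *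
          G ((Equiv.funSplitAt j Bool).symm (b, r) j))
      = f j b * G b * ((∏ i : {m : Fin N // m ≠ j}, f i.1 (r i)) * H (base r)) := by
    intro b r
    rw [key]
    rw [Function.update_self, hH]
    have hprod : (∏ m, f m (Function.update (base r) j b m))
        = f j b * ∏ i : {m : Fin N // m ≠ j}, f i.1 (r i) := by
      rw [← Finset.mul_prod_erase Finset.univ _ (Finset.mem_univ j)]
      congr 1
      · rw [Function.update_self]
      · rw [Finset.prod_subtype (Finset.univ.erase j) (p := fun m : Fin N => m ≠ j)
          (by simp) (fun m : Fin N => f m (Function.update (base r) j b m))]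
        apply Finset.prod_congr rfl
        intro i _
        rw [Function.update_of_ne i.2]
        simp [base, i.2]
    rw [hprod]; ring
  simp only [step]
  rw [Fintype.sum_bool]
  rw [← Finset.sum_add_distrib]
  rw [Finset.mul_sum]
  apply Finset.sum_congr rfl
  intro r _
  ring

lemma split_one14' {N : ℕ} (j : Fin N) (f : Fin N → Bool → ℝ) (G : Bool → ℝ)
    (H : (Fin N → Bool) → ℝ) (hH : ∀ ε (b : Bool), H (Function.update ε j b) = H ε)
    (hf1 : f j false + f j true = 1) :
    ∑ ε : Fin N → Bool, (∏ m, f m (ε m)) * (H ε * G (ε j))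
      = (f j false * G false + f j true * G true) *
        ∑ ε : Fin N → Bool, (∏ m, f m (ε m)) * H ε := by
  have h2 := split_one14 j f (fun _ => 1) H hH
  simp only [mul_one, hf1, one_mul] at h2
  rw [split_one14 j f G H hH, h2]

lemma change_one14 {N : ℕ} (j : Fin N) (f f' : Fin N → Bool → ℝ)
    (hagree : ∀ m, m ≠ j → f m = f' m)
    (hf1 : f j false + f j true = 1) (hf1' : f' j false + f' j true = 1)
    (H : (Fin N → Bool) → ℝ) (hH : ∀ ε (b : Bool), H (Function.update ε j b) = H ε) :
    ∑ ε : Fin N → Bool, (∏ m, f m (ε m)) * H ε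
      = ∑ ε : Fin N → Bool, (∏ m, f' m (ε m)) * H ε := by
  have h1 := split_one14 j f (fun _ => 1) H hH
  have h2 := split_one14 j f' (fun _ => 1) H hH
  simp only [mul_one, hf1, hf1', one_mul] at h1 h2
  rw [h1, h2]
  apply Finset.sum_congr rfl
  intro r _
  congr 1
  exact Finset.prod_congr rfl (fun i _ => by rw [hagree i.1 i.2])

lemma change_many14 {N : ℕ} (s : Finset (Fin N)) (f f' : Fin N → Bool → ℝ)
    (hagree : ∀ m ∉ s, f m = f' m)
    (hf1 : ∀ m, f m false + f m true = 1) (hf1' : ∀ m, f' m false + f' m true = 1)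
    (H : (Fin N → Bool) → ℝ)
    (hH : ∀ m ∈ s, ∀ ε (b : Bool), H (Function.update ε m b) = H ε) :
    ∑ ε : Fin N → Bool, (∏ m, f m (ε m)) * H ε
      = ∑ ε : Fin N → Bool, (∏ m, f' m (ε m)) * H ε := by
  classical
  induction s using Finset.induction generalizing f with
  | empty =>
    have : f = f' := funext fun m => hagree m (by simp)
    rw [this]
  | insert j s hj ih =>
    set f'' : Fin N → Bool → ℝ := Function.update f j (f' j) with hf''
    have step1 : ∑ ε : Fin N → Bool, (∏ m, f m (ε m)) * H ε
        = ∑ ε : Fin N → Bool, (∏ m, f'' m (ε m)) * H ε := by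
      apply change_one14 j f f'' (fun m hm => by simp [f'', Function.update_of_ne hm])
        (hf1 j) (by simp [f'', hf1' j]) H (hH j (Finset.mem_insert_self j s))
    rw [step1]
    apply ih
    · intro m hm
      by_cases h : m = j
      · subst h; simp [f'']
      · have : m ∉ insert j s := by simp [h, hm]
        simp [f'', Function.update_of_ne h, hagree m this]
    · intro m
      by_cases h : m = j
      · subst h; simp [f'', hf1' m]
      · simp [f'', Function.update_of_ne h, hf1 m]
    · exact fun m hm => hH m (Finset.mem_insert_of_mem hm)

/-! ### Stock price lemmas -/

lemma stock14_pos {N : ℕ} {s0 : ℝ} (hs0 : 0 < s0) (ω : Fin N → ℝ) (n : ℕ) :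
    0 < stock14 N s0 ω n := mul_pos hs0 (Real.exp_pos _)

lemma stock14_zero {N : ℕ} (s0 : ℝ) (ω : Fin N → ℝ) : stock14 N s0 ω 0 = s0 := by
  simp [stock14]

lemma stock14_succ {N : ℕ} (s0 : ℝ) (ω : Fin N → ℝ) {k : ℕ} (hk : k < N) :
    stock14 N s0 ω (k + 1) = stock14 N s0 ω k * Real.exp (ω ⟨k, hk⟩) := by
  unfold stock14
  have hset : Finset.univ.filter (fun m : Fin N => (m : ℕ) < k + 1)
      = insert ⟨k, hk⟩ (Finset.univ.filter (fun m : Fin N => (m : ℕ) < k)) := by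
    ext m
    simp only [Finset.mem_filter, Finset.mem_univ, true_and, Finset.mem_insert]
    constructor
    · intro h
      rcases Nat.lt_succ_iff_lt_or_eq.1 h with h | h
      · exact Or.inr h
      · exact Or.inl (Fin.ext h)
    · rintro (h | h)
      · subst h; exact Nat.lt_succ_self k
      · exact h.trans (Nat.lt_succ_self k)
  rw [hset, Finset.sum_insert (by simp), Real.exp_add]
  ring

lemma stock14_agree {N : ℕ} (s0 : ℝ) {ω ω' : Fin N → ℝ} {n : ℕ}
    (h : ∀ m : Fin N, (m : ℕ) < n → ω m = ω' m) :
    stock14 N s0 ω n = stock14 N s0 ω' n := by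
  unfold stock14
  congr 1
  apply congrArg
  apply Finset.sum_congr rfl
  intro m hm
  exact h m (Finset.mem_filter.1 hm).2

/-! ### The interpolation weights -/

noncomputable section

def p14 {N : ℕ} (hi : ℝ) (ω : Fin N → ℝ) (m : Fin N) : ℝ :=
  (Real.exp (ω m) - Real.exp (-hi)) / (Real.exp hi - Real.exp (-hi))

def f14 {N : ℕ} (hi : ℝ) (ω : Fin N → ℝ) (m : Fin N) (b : Bool) : ℝ :=
  if b then p14 hi ω m else 1 - p14 hi ω m

def bs14 {N : ℕ} (hi : ℝ) (ε : Fin N → Bool) : Fin N → ℝ :=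
  fun m => if ε m then hi else -hi

def w14 {N : ℕ} (hi : ℝ) (ω : Fin N → ℝ) (ε : Fin N → Bool) : ℝ :=
  ∏ m, f14 hi ω m (ε m)

end

lemma f14_sum {N : ℕ} (hi : ℝ) (ω : Fin N → ℝ) (m : Fin N) :
    f14 hi ω m false + f14 hi ω m true = 1 := by
  simp [f14]

lemma f14_mean {N : ℕ} {hi : ℝ} (hhi : 0 < hi) (ω : Fin N → ℝ) (m : Fin N) :
    f14 hi ω m false * Real.exp (-hi) + f14 hi ω m true * Real.exp hi
      = Real.exp (ω m) := by
  have hD : Real.exp (-hi) < Real.exp hi := Real.exp_lt_exp.2 (by linarith)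
  have hD' : Real.exp hi - Real.exp (-hi) ≠ 0 := by linarith
  simp only [f14, if_true, if_false, p14, Bool.false_eq_true]
  field_simp
  ring

lemma f14_nonneg {N : ℕ} {hi : ℝ} (hhi : 0 < hi) {ω : Fin N → ℝ} {m : Fin N}
    (habs : |ω m| ≤ hi) (b : Bool) : 0 ≤ f14 hi ω m b := by
  have hD : Real.exp (-hi) < Real.exp hi := Real.exp_lt_exp.2 (by linarith)
  obtain ⟨h1, h2⟩ := abs_le.1 habs
  have hp0 : 0 ≤ p14 hi ω m := by
    apply div_nonneg _ (by linarith)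
    have := Real.exp_le_exp.2 h1
    linarith
  have hp1 : p14 hi ω m ≤ 1 := by
    rw [p14, div_le_one (by linarith)]
    have := Real.exp_le_exp.2 h2
    linarith
  cases b <;> simp [f14] <;> linarith

lemma bs14_update {N : ℕ} (hi : ℝ) (ε : Fin N → Bool) (m : Fin N) (b : Bool) :
    bs14 hi (Function.update ε m b)
      = Function.update (bs14 hi ε) m (if b then hi else -hi) := by
  funext m'
  by_cases h : m' = m
  · subst h; simp [bs14]
  · simp [bs14, Function.update_of_ne h]

lemma bs14_abs {N : ℕ} {hi : ℝ} (hhi : 0 ≤ hi) (ε : Fin N → Bool) (m : Fin N) :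
    |bs14 hi ε m| = hi := by
  cases hε : ε m <;> simp [bs14, hε, abs_of_nonneg hhi]

lemma w14_sum_one {N : ℕ} (hi : ℝ) (ω : Fin N → ℝ) :
    ∑ ε : Fin N → Bool, w14 hi ω ε = 1 := by
  simp only [w14]
  rw [sum_weights14]
  rw [Finset.prod_congr rfl (fun m _ => f14_sum hi ω m)]
  simp

/-- Invariance of adapted quantities of the binomial scenario under changing a late
coordinate. -/
lemma H14_inv {N : ℕ} {s0 hi : ℝ} {γ : ℕ → (Fin N → ℝ) → ℝ} (hγ : adapted14 N γ)
    (k : ℕ) (m : Fin N) (hm : ¬ ((m : ℕ) < k)) (ε : Fin N → Bool) (b : Bool) :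
    γ k (bs14 hi (Function.update ε m b)) * stock14 N s0 (bs14 hi (Function.update ε m b)) k
      = γ k (bs14 hi ε) * stock14 N s0 (bs14 hi ε) k := by
  have hag : ∀ m' : Fin N, (m' : ℕ) < k → bs14 hi (Function.update ε m b) m' = bs14 hi ε m' := by
    intro m' hm'
    rw [bs14_update]
    apply Function.update_of_ne
    intro h
    exact hm (h ▸ hm')
  rw [hγ k _ _ hag, stock14_agree s0 hag]

noncomputable def gam14 (N : ℕ) (s0 hi : ℝ) (γ : ℕ → (Fin N → ℝ) → ℝ)
    (k : ℕ) (ω : Fin N → ℝ) : ℝ :=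
  (∑ ε : Fin N → Bool, w14 hi ω ε * (γ k (bs14 hi ε) * stock14 N s0 (bs14 hi ε) k))
    / stock14 N s0 ω k

lemma pull14 {N : ℕ} (hi : ℝ) (ω : Fin N → ℝ) (j : Fin N) (G : Bool → ℝ)
    (H : (Fin N → Bool) → ℝ) (hH : ∀ ε (b : Bool), H (Function.update ε j b) = H ε) :
    ∑ ε : Fin N → Bool, w14 hi ω ε * (H ε * G (ε j))
      = (f14 hi ω j false * G false + f14 hi ω j true * G true) *
        ∑ ε : Fin N → Bool, w14 hi ω ε * H ε := by
  simp only [w14]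
  exact split_one14' j (f14 hi ω) G H hH (f14_sum hi ω j)

lemma stock14_bs_inv {N : ℕ} (s0 hi : ℝ) (k : ℕ) (m : Fin N) (hm : ¬ ((m : ℕ) < k))
    (ε : Fin N → Bool) (b : Bool) :
    stock14 N s0 (bs14 hi (Function.update ε m b)) k = stock14 N s0 (bs14 hi ε) k := by
  apply stock14_agree
  intro m' hm'
  rw [bs14_update]
  apply Function.update_of_ne
  intro h
  exact hm (h ▸ hm')

lemma stockE14 {N : ℕ} {s0 hi : ℝ} (hhi : 0 < hi) {ω : Fin N → ℝ}
    (habs : ∀ m, |ω m| ≤ hi) :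
    ∀ n, n ≤ N → ∑ ε : Fin N → Bool, w14 hi ω ε * stock14 N s0 (bs14 hi ε) n
      = stock14 N s0 ω n := by
  intro n
  induction n with
  | zero =>
    intro _
    simp only [stock14_zero]
    rw [← Finset.sum_mul, w14_sum_one, one_mul]
  | succ n ih =>
    intro hn
    have hnN : n < N := hn
    set j : Fin N := ⟨n, hnN⟩ with hj
    set G : Bool → ℝ := fun b => Real.exp (if b then hi else -hi) with hG
    have hrw : ∀ ε : Fin N → Bool,
        stock14 N s0 (bs14 hi ε) (n + 1) = stock14 N s0 (bs14 hi ε) n * G (ε j) := by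
      intro ε
      rw [stock14_succ s0 _ hnN]
      simp only [G, bs14, hj]
    rw [Finset.sum_congr rfl (fun ε _ => by rw [hrw ε])]
    rw [pull14 hi ω j G _ (fun ε b => stock14_bs_inv s0 hi n j (lt_irrefl n) ε b)]
    have hcoef : f14 hi ω j false * G false + f14 hi ω j true * G true
        = Real.exp (ω j) := by
      simp only [G, if_true, if_false, Bool.false_eq_true]
      exact f14_mean hhi ω j
    rw [hcoef, ih (Nat.le_of_lt hnN), stock14_succ s0 ω hnN]
    ring

lemma gam14_adapted {N : ℕ} (s0 hi : ℝ) (γ : ℕ → (Fin N → ℝ) → ℝ)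
    (hγ : adapted14 N γ) : adapted14 N (gam14 N s0 hi γ) := by
  intro n ω ω' hag
  unfold gam14
  congr 1
  · simp only [w14]
    apply change_many14 (Finset.univ.filter fun m : Fin N => ¬ ((m : ℕ) < n))
    · intro m hm
      have hmn : (m : ℕ) < n := by simpa using hm
      funext b
      simp [f14, p14, hag m hmn]
    · exact fun m => f14_sum hi ω m
    · exact fun m => f14_sum hi ω' m
    · intro m hm ε b
      exact H14_inv hγ n m (by simpa using hm) ε b
  · exact stock14_agree s0 hag

lemma gain14 {N : ℕ} {s0 hi : ℝ} (hs0 : 0 < s0) (hhi : 0 < hi)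
    {γ : ℕ → (Fin N → ℝ) → ℝ} (hγ : adapted14 N γ) {ω : Fin N → ℝ}
    {k : ℕ} (hk : k < N) :
    gam14 N s0 hi γ k ω * (stock14 N s0 ω (k + 1) - stock14 N s0 ω k)
      = ∑ ε : Fin N → Bool, w14 hi ω ε *
          (γ k (bs14 hi ε) * (stock14 N s0 (bs14 hi ε) (k + 1) - stock14 N s0 (bs14 hi ε) k)) := by
  set j : Fin N := ⟨k, hk⟩ with hj
  set G : Bool → ℝ := fun b => Real.exp (if b then hi else -hi) - 1 with hG
  have hrw : ∀ ε : Fin N → Bool,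
      γ k (bs14 hi ε) * (stock14 N s0 (bs14 hi ε) (k + 1) - stock14 N s0 (bs14 hi ε) k)
        = (γ k (bs14 hi ε) * stock14 N s0 (bs14 hi ε) k) * G (ε j) := by
    intro ε
    rw [stock14_succ s0 _ hk]
    simp only [G, bs14, hj]
    ring
  rw [Finset.sum_congr rfl (fun ε _ => by rw [hrw ε])]
  rw [pull14 hi ω j G _ (fun ε b => H14_inv hγ k j (lt_irrefl k) ε b)]
  have hcoef : f14 hi ω j false * G false + f14 hi ω j true * G true
      = Real.exp (ω j) - 1 := by
    have h1 := f14_mean hhi ω j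
    have h2 := f14_sum hi ω j
    simp only [G, if_true, if_false, Bool.false_eq_true]
    linear_combination h1 - h2
  rw [hcoef]
  show gam14 N s0 hi γ k ω * (stock14 N s0 ω (k + 1) - stock14 N s0 ω k) = _
  rw [stock14_succ s0 ω hk]
  unfold gam14
  have hSpos := stock14_pos hs0 ω k
  field_simp
  ring

lemma secondterm14 {N : ℕ} {s0 hi : ℝ} (hhi : 0 < hi)
    {γ : ℕ → (Fin N → ℝ) → ℝ} (hγ : adapted14 N γ) {ω : Fin N → ℝ}
    {n : ℕ} (hn : n < N) :
    ∑ ε : Fin N → Bool, w14 hi ω ε * (γ n (bs14 hi ε) * stock14 N s0 (bs14 hi ε) (n + 1))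
      = Real.exp (ω ⟨n, hn⟩) *
        ∑ ε : Fin N → Bool, w14 hi ω ε * (γ n (bs14 hi ε) * stock14 N s0 (bs14 hi ε) n) := by
  set j : Fin N := ⟨n, hn⟩ with hj
  set G : Bool → ℝ := fun b => Real.exp (if b then hi else -hi) with hG
  have hrw : ∀ ε : Fin N → Bool,
      γ n (bs14 hi ε) * stock14 N s0 (bs14 hi ε) (n + 1)
        = (γ n (bs14 hi ε) * stock14 N s0 (bs14 hi ε) n) * G (ε j) := by
    intro ε
    rw [stock14_succ s0 _ hn]
    simp only [G, bs14, hj]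
    ring
  rw [Finset.sum_congr rfl (fun ε _ => by rw [hrw ε])]
  rw [pull14 hi ω j G _ (fun ε b => H14_inv hγ n j (lt_irrefl n) ε b)]
  have hcoef : f14 hi ω j false * G false + f14 hi ω j true * G true
      = Real.exp (ω j) := by
    simp only [G, if_true, if_false, Bool.false_eq_true]
    exact f14_mean hhi ω j
  rw [hcoef]

lemma cost14 {N : ℕ} {s0 hi : ℝ} (hs0 : 0 < s0) (hhi : 0 < hi)
    {γ : ℕ → (Fin N → ℝ) → ℝ} (hγ : adapted14 N γ) {ω : Fin N → ℝ}
    {k : ℕ} (hk : k < N) :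
    (gam14 N s0 hi γ k ω - (if k = 0 then 0 else gam14 N s0 hi γ (k - 1) ω))
        * stock14 N s0 ω k
      = ∑ ε : Fin N → Bool, w14 hi ω ε *
          ((γ k (bs14 hi ε) - (if k = 0 then 0 else γ (k - 1) (bs14 hi ε)))
            * stock14 N s0 (bs14 hi ε) k) := by
  rcases k with _ | n
  · simp only [↓reduceIte, sub_zero]
    unfold gam14
    rw [div_mul_cancel₀ _ (stock14_pos hs0 ω 0).ne']
  · have hn : n < N := Nat.lt_of_succ_lt hk
    simp only [Nat.succ_ne_zero, if_false, Nat.add_sub_cancel]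
    have hexp : ∀ ε : Fin N → Bool,
        w14 hi ω ε * ((γ (n + 1) (bs14 hi ε) - γ n (bs14 hi ε)) * stock14 N s0 (bs14 hi ε) (n + 1))
          = w14 hi ω ε * (γ (n + 1) (bs14 hi ε) * stock14 N s0 (bs14 hi ε) (n + 1))
            - w14 hi ω ε * (γ n (bs14 hi ε) * stock14 N s0 (bs14 hi ε) (n + 1)) := by
      intro ε; ring
    rw [Finset.sum_congr rfl (fun ε _ => hexp ε), Finset.sum_sub_distrib]
    rw [secondterm14 hhi hγ hn]
    unfold gam14
    rw [stock14_succ s0 ω hn]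
    have h1 := (stock14_pos hs0 ω n).ne'
    have h2 := (stock14_pos hs0 ω (n + 1)).ne'
    rw [stock14_succ s0 ω hn] at h2
    field_simp

lemma super14 {N : ℕ} {s0 hi : ℝ} (hs0 : 0 < s0) (hhi : 0 < hi)
    (g : ℕ → ℝ → ℝ) (hg_conv : ∀ n, ConvexOn ℝ Set.univ (g n))
    (F : (Fin (N + 1) → ℝ) → ℝ)
    (hF_conv : ConvexOn ℝ {v : Fin (N + 1) → ℝ | ∀ i, 0 ≤ v i} F)
    (y : ℝ) (γ : ℕ → (Fin N → ℝ) → ℝ) (hγ : adapted14 N γ)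
    (hsup : ∀ ε : Fin N → Bool,
      F (fun i : Fin (N + 1) => stock14 N s0 (bs14 hi ε) i)
        ≤ wealth14 N s0 g y γ (bs14 hi ε))
    (ω : Fin N → ℝ) (hω : ∀ m, |ω m| ≤ hi) :
    F (fun i : Fin (N + 1) => stock14 N s0 ω i)
      ≤ wealth14 N s0 g y (gam14 N s0 hi γ) ω := by
  have hwnn : ∀ ε : Fin N → Bool, 0 ≤ w14 hi ω ε :=
    fun ε => Finset.prod_nonneg fun m _ => f14_nonneg hhi (hω m) _
  have hw1 := w14_sum_one hi ω
  have step1 : F (fun i : Fin (N + 1) => stock14 N s0 ω i)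
      ≤ ∑ ε : Fin N → Bool, w14 hi ω ε *
          F (fun i : Fin (N + 1) => stock14 N s0 (bs14 hi ε) i) := by
    have hmem : ∀ ε ∈ (Finset.univ : Finset (Fin N → Bool)),
        (fun i : Fin (N + 1) => stock14 N s0 (bs14 hi ε) i)
          ∈ {v : Fin (N + 1) → ℝ | ∀ i, 0 ≤ v i} :=
      fun ε _ i => (stock14_pos hs0 _ _).le
    have hJ := hF_conv.map_sum_le (fun ε _ => hwnn ε) hw1 hmem
    have heq : (∑ ε : Fin N → Bool, w14 hi ω ε •
          (fun i : Fin (N + 1) => stock14 N s0 (bs14 hi ε) i))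
        = fun i : Fin (N + 1) => stock14 N s0 ω i := by
      funext i
      rw [Finset.sum_apply]
      simp only [Pi.smul_apply, smul_eq_mul]
      exact stockE14 hhi hω i (Nat.lt_succ_iff.1 i.isLt)
    rw [heq] at hJ
    simpa only [smul_eq_mul] using hJ
  have step2 : ∑ ε : Fin N → Bool, w14 hi ω ε *
        F (fun i : Fin (N + 1) => stock14 N s0 (bs14 hi ε) i)
      ≤ ∑ ε : Fin N → Bool, w14 hi ω ε * wealth14 N s0 g y γ (bs14 hi ε) :=
    Finset.sum_le_sum fun ε _ => mul_le_mul_of_nonneg_left (hsup ε) (hwnn ε)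
  have step3 : ∑ ε : Fin N → Bool, w14 hi ω ε * wealth14 N s0 g y γ (bs14 hi ε)
      ≤ wealth14 N s0 g y (gam14 N s0 hi γ) ω := by
    unfold wealth14
    have expand : ∑ ε : Fin N → Bool, w14 hi ω ε * (y + ∑ k ∈ Finset.range N,
        (γ k (bs14 hi ε) * (stock14 N s0 (bs14 hi ε) (k + 1) - stock14 N s0 (bs14 hi ε) k)
          - g k ((γ k (bs14 hi ε) - (if k = 0 then 0 else γ (k - 1) (bs14 hi ε)))
              * stock14 N s0 (bs14 hi ε) k)))
        = y + ∑ k ∈ Finset.range N, ∑ ε : Fin N → Bool, w14 hi ω ε *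
            (γ k (bs14 hi ε) * (stock14 N s0 (bs14 hi ε) (k + 1) - stock14 N s0 (bs14 hi ε) k)
              - g k ((γ k (bs14 hi ε) - (if k = 0 then 0 else γ (k - 1) (bs14 hi ε)))
                  * stock14 N s0 (bs14 hi ε) k)) := by
      simp only [mul_add]
      rw [Finset.sum_add_distrib, ← Finset.sum_mul, hw1, one_mul]
      congr 1
      simp only [Finset.mul_sum]
      rw [Finset.sum_comm]
    rw [expand]
    apply add_le_add (le_refl _)
    apply Finset.sum_le_sum
    intro k hk
    have hkN : k < N := Finset.mem_range.1 hk
    have jens : g k ((gam14 N s0 hi γ k ω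
          - (if k = 0 then 0 else gam14 N s0 hi γ (k - 1) ω)) * stock14 N s0 ω k)
        ≤ ∑ ε : Fin N → Bool, w14 hi ω ε *
            g k ((γ k (bs14 hi ε) - (if k = 0 then 0 else γ (k - 1) (bs14 hi ε)))
              * stock14 N s0 (bs14 hi ε) k) := by
      rw [cost14 hs0 hhi hγ hkN]
      have hJ := (hg_conv k).map_sum_le (t := Finset.univ)
        (p := fun ε : Fin N → Bool =>
          (γ k (bs14 hi ε) - (if k = 0 then 0 else γ (k - 1) (bs14 hi ε)))
            * stock14 N s0 (bs14 hi ε) k)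
        (fun ε _ => hwnn ε) hw1 (fun ε _ => Set.mem_univ _)
      simpa only [smul_eq_mul] using hJ
    calc ∑ ε : Fin N → Bool, w14 hi ω ε *
            (γ k (bs14 hi ε) * (stock14 N s0 (bs14 hi ε) (k + 1) - stock14 N s0 (bs14 hi ε) k)
              - g k ((γ k (bs14 hi ε) - (if k = 0 then 0 else γ (k - 1) (bs14 hi ε)))
                  * stock14 N s0 (bs14 hi ε) k))
        = (∑ ε : Fin N → Bool, w14 hi ω ε *
            (γ k (bs14 hi ε) * (stock14 N s0 (bs14 hi ε) (k + 1) - stock14 N s0 (bs14 hi ε) k)))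
          - ∑ ε : Fin N → Bool, w14 hi ω ε *
            g k ((γ k (bs14 hi ε) - (if k = 0 then 0 else γ (k - 1) (bs14 hi ε)))
              * stock14 N s0 (bs14 hi ε) k) := by
          rw [← Finset.sum_sub_distrib]
          exact Finset.sum_congr rfl fun ε _ => by ring
      _ ≤ (∑ ε : Fin N → Bool, w14 hi ω ε *
            (γ k (bs14 hi ε) * (stock14 N s0 (bs14 hi ε) (k + 1) - stock14 N s0 (bs14 hi ε) k)))
          - g k ((gam14 N s0 hi γ k ω
              - (if k = 0 then 0 else gam14 N s0 hi γ (k - 1) ω)) * stock14 N s0 ω k) :=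
          sub_le_sub_left jens _
      _ = gam14 N s0 hi γ k ω * (stock14 N s0 ω (k + 1) - stock14 N s0 ω k)
          - g k ((gam14 N s0 hi γ k ω
              - (if k = 0 then 0 else gam14 N s0 hi γ (k - 1) ω)) * stock14 N s0 ω k) := by
          rw [gain14 hs0 hhi hγ hkN]
  exact step1.trans (step2.trans step3)

theorem stmt_14 (N : ℕ) (s0 σlow σhigh : ℝ)
    (hs0 : 0 < s0) (hσ0 : 0 ≤ σlow) (hσ : σlow ≤ σhigh)
    (g : ℕ → ℝ → ℝ)
    (hg_conv : ∀ n, ConvexOn ℝ Set.univ (g n))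
    (hg_nn : ∀ n β, 0 ≤ g n β) (hg0 : ∀ n, g n 0 = 0)
    (F : (Fin (N + 1) → ℝ) → ℝ)
    (hF_conv : ConvexOn ℝ {v : Fin (N + 1) → ℝ | ∀ i, 0 ≤ v i} F)
    (hF_nn : ∀ v, 0 ≤ F v) :
    price14 N s0 g F σlow σhigh = price14 N s0 g F σhigh σhigh := by
  rcases eq_or_lt_of_le hσ with heq | hlt
  · rw [heq]
  · have hhi : 0 < σhigh := lt_of_le_of_lt hσ0 hlt
    unfold price14
    congr 1
    ext y
    simp only [Set.mem_setOf_eq]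
    constructor
    · rintro ⟨γ, hγ, h⟩
      exact ⟨γ, hγ, fun ω hω => h ω (fun m => ⟨hσ.trans (hω m).1, (hω m).2⟩)⟩
    · rintro ⟨γ, hγ, h⟩
      refine ⟨gam14 N s0 σhigh γ, gam14_adapted s0 σhigh γ hγ, ?_⟩
      intro ω hω
      apply super14 hs0 hhi g hg_conv F hF_conv y γ hγ ?_ ω (fun m => (hω m).2)
      intro ε
      apply h
      intro m
      rw [bs14_abs hhi.le]
      exact ⟨le_refl _, le_refl _⟩
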